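/- Let R be a commutative ring. Then R is a Gelfand ring if and only if the prime spectrum Spec(R), with the Zariski topology, is a normal topological space (any two disjoint closed sets can be separated by disjoint open sets). -/
import Mathlib


/-- A commutative ring `R` is a Gelfand ring if for any two distinct maximal ideals
`m`, `m'` there are `a ∉ m`, `a' ∉ m'` with `a * a' = 0`. -/
def IsGelfandRing (R : Type*) [CommRing R] : Prop :=
  ∀ m m' : Ideal R, m.IsMaximal → m'.IsMaximal → m ≠ m' →
    ∃ a a' : R, a ∉ m ∧ a' ∉ m' ∧ a * a' = 0

open PrimeSpectrum in
/-- Key separation lemma: in a Gelfand ring, a maximal point outside a closed set `t`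
can be separated from `t`: there is `b ∉ m` and an open `V ⊇ t` disjoint from `D(b)`. -/
theorem IsGelfandRing.exists_basicOpen_disjoint {R : Type*} [CommRing R]
    (hG : IsGelfandRing R) {t : Set (PrimeSpectrum R)} (ht : IsClosed t)
    {m : PrimeSpectrum R} (hm : m.asIdeal.IsMaximal) (hmt : m ∉ t) :
    ∃ b : R, b ∉ m.asIdeal ∧ ∃ V : Set (PrimeSpectrum R),
      IsOpen V ∧ t ⊆ V ∧ Disjoint (↑(basicOpen b)) V := by
  -- for each q ∈ t, pick a maximal point above q in t and apply Gelfand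
  have key : ∀ q : t, ∃ a f : R, a ∉ m.asIdeal ∧ (q : PrimeSpectrum R) ∈ basicOpen f ∧
      a * f = 0 := by
    rintro ⟨q, hq⟩
    obtain ⟨M, hM, hqM⟩ := q.asIdeal.exists_le_maximal q.2.ne_top
    have hMt : (⟨M, hM.isPrime⟩ : PrimeSpectrum R) ∈ t :=
      ht.stableUnderSpecialization ((le_iff_specializes q ⟨M, hM.isPrime⟩).mp hqM) hq
    have hne : m.asIdeal ≠ M := by
      rintro rfl
      exact hmt (by convert hMt)
    obtain ⟨a, f, ha, hf, haf⟩ := hG m.asIdeal M hm hM hne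
    exact ⟨a, f, ha, (mem_basicOpen f q).mpr fun h => hf (hqM h), haf⟩
  choose a f ha hf haf using key
  -- compactness of t: finitely many basic opens cover t
  have hcov : t ⊆ ⋃ q : t, ↑(basicOpen (f q)) := fun q hq =>
    Set.mem_iUnion.mpr ⟨⟨q, hq⟩, hf ⟨q, hq⟩⟩
  obtain ⟨s, hs⟩ := (ht.isCompact).elim_finite_subcover
    (fun q : t => ↑(basicOpen (f q))) (fun q => (basicOpen (f q)).isOpen) hcov
  refine ⟨∏ q ∈ s, a q, ?_, ⋃ q ∈ s, ↑(basicOpen (f q)), ?_, hs, ?_⟩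
  · exact Submonoid.prod_mem m.asIdeal.primeCompl (fun q _ => ha q)
  · exact isOpen_biUnion fun q _ => (basicOpen (f q)).isOpen
  · rw [Set.disjoint_iUnion₂_right]
    intro q hq
    rw [Set.disjoint_left]
    intro x hx hx'
    have hbx : (∏ q ∈ s, a q) ∉ x.asIdeal := (mem_basicOpen _ x).mp hx
    have hfx : f q ∉ x.asIdeal := (mem_basicOpen _ x).mp hx'
    have : (∏ q ∈ s, a q) * f q ∉ x.asIdeal :=
      Submonoid.mul_mem x.asIdeal.primeCompl hbx hfx
    apply this
    obtain ⟨c, hc⟩ := Finset.dvd_prod_of_mem a hq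
    rw [hc, mul_comm (a q) c, mul_assoc, haf q, mul_zero]
    exact x.asIdeal.zero_mem

/-- A commutative ring is Gelfand if and only if its prime spectrum is a normal
topological space. -/
theorem isGelfandRing_iff_normalSpace_primeSpectrum (R : Type*) [CommRing R] :
    IsGelfandRing R ↔ NormalSpace (PrimeSpectrum R) := by
  constructor
  · intro hG
    constructor
    intro s t hs ht hst
    -- for each x ∈ s, separate x from t using the key lemma
    have key : ∀ x : s, ∃ b : R, b ∉ (x : PrimeSpectrum R).asIdeal ∧
        ∃ V : Set (PrimeSpectrum R), IsOpen V ∧ t ⊆ V ∧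
          Disjoint (↑(PrimeSpectrum.basicOpen b)) V := by
      rintro ⟨x, hx⟩
      obtain ⟨M, hM, hxM⟩ := x.asIdeal.exists_le_maximal x.2.ne_top
      have hMs : (⟨M, hM.isPrime⟩ : PrimeSpectrum R) ∈ s :=
        hs.stableUnderSpecialization
          ((PrimeSpectrum.le_iff_specializes x ⟨M, hM.isPrime⟩).mp hxM) hx
      have hMt : (⟨M, hM.isPrime⟩ : PrimeSpectrum R) ∉ t :=
        fun h => (Set.disjoint_left.mp hst hMs) h
      obtain ⟨b, hb, V, hV, htV, hdV⟩ :=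
        hG.exists_basicOpen_disjoint ht (m := ⟨M, hM.isPrime⟩) hM hMt
      exact ⟨b, fun h => hb (hxM h), V, hV, htV, hdV⟩
    choose b hb V hV htV hdV using key
    have hcov : s ⊆ ⋃ x : s, ↑(PrimeSpectrum.basicOpen (b x)) := fun x hx =>
      Set.mem_iUnion.mpr ⟨⟨x, hx⟩, (PrimeSpectrum.mem_basicOpen _ _).mpr (hb ⟨x, hx⟩)⟩
    obtain ⟨F, hF⟩ := (hs.isCompact).elim_finite_subcover
      (fun x : s => ↑(PrimeSpectrum.basicOpen (b x)))
      (fun x => (PrimeSpectrum.basicOpen (b x)).isOpen) hcov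
    refine ⟨⋃ x ∈ F, ↑(PrimeSpectrum.basicOpen (b x)), ⋂ x ∈ F, V x, ?_, ?_, hF, ?_, ?_⟩
    · exact isOpen_biUnion fun x _ => (PrimeSpectrum.basicOpen (b x)).isOpen
    · exact isOpen_biInter_finset fun x _ => hV x
    · exact Set.subset_iInter₂ fun x _ => htV x
    · rw [Set.disjoint_iUnion₂_left]
      intro x hx
      exact (hdV x).mono_right (Set.iInter₂_subset x hx)
  · intro hN m m' hm hm' hne
    set x : PrimeSpectrum R := ⟨m, hm.isPrime⟩
    set y : PrimeSpectrum R := ⟨m', hm'.isPrime⟩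
    have hxy : x ≠ y := fun h => hne (congrArg PrimeSpectrum.asIdeal h)
    obtain ⟨U, W, hU, hW, hxU, hyW, hUW⟩ := hN.normal {x} {y}
      ((PrimeSpectrum.isClosed_singleton_iff_isMaximal x).mpr hm)
      ((PrimeSpectrum.isClosed_singleton_iff_isMaximal y).mpr hm')
      (Set.disjoint_singleton.mpr hxy)
    obtain ⟨_, ⟨g, rfl⟩, hxg, hgU⟩ :=
      PrimeSpectrum.isTopologicalBasis_basic_opens.exists_subset_of_mem_open
        (hxU rfl) hU
    obtain ⟨_, ⟨g', rfl⟩, hyg, hgW⟩ :=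
      PrimeSpectrum.isTopologicalBasis_basic_opens.exists_subset_of_mem_open
        (hyW rfl) hW
    have hnil : IsNilpotent (g * g') := by
      rw [← PrimeSpectrum.basicOpen_eq_bot_iff]
      rw [PrimeSpectrum.basicOpen_mul]
      apply SetLike.ext'
      rw [TopologicalSpace.Opens.coe_inf, TopologicalSpace.Opens.coe_bot]
      exact Set.subset_empty_iff.mp fun z ⟨hz1, hz2⟩ =>
        Set.disjoint_left.mp hUW (hgU hz1) (hgW hz2)
    obtain ⟨n, hn⟩ := hnil
    refine ⟨g ^ n, g' ^ n, ?_, ?_, by rw [← mul_pow, hn]⟩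
    · exact Submonoid.pow_mem m.primeCompl ((PrimeSpectrum.mem_basicOpen g x).mp hxg) n
    · exact Submonoid.pow_mem m'.primeCompl ((PrimeSpectrum.mem_basicOpen g' y).mp hyg) n
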